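/- For all constants γ_A > 0, X ∈ (0,1), C₁ > 0, and β > 0, there exist constants C > 0 and γ > 0 (independent of ε and μ) such that for all 0 < ε ≤ μ ≤ 1, all M ∈ ℕ, and all x̂ ≥ 0 with x̂·ε·γ_A ≤ X: Σ_{i=M+1}^{∞} (ε/μ)^i · Σ_{k=i−M}^{i} μ^k x̂^k γ_A^k · (μ + 1/(i−k+1))^{i−k} · (1/(i−k)!) · (C₁(i−k) + x̂)^{2(i−k)} · e^{−βx̂} ≤ (C·μ/(1−X)) · (γ·ε·(M+1+1/μ))^{M+1} · e^{−βx̂/2}. -/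

import Mathlib

set_option maxHeartbeats 1000000

lemma pow_le_fact_mul_exp {x : ℝ} (hx : 0 ≤ x) (n : ℕ) :
    x ^ n ≤ (n.factorial : ℝ) * Real.exp x := by
  have h := Real.sum_le_exp_of_nonneg hx (n + 1)
  have h1 : x ^ n / (n.factorial : ℝ) ≤ Real.exp x := by
    refine le_trans ?_ h
    exact Finset.single_le_sum (f := fun i => x ^ i / (i.factorial : ℝ))
      (fun i _ => by positivity) (Finset.self_mem_range_succ n)
  have hf : (0:ℝ) < (n.factorial : ℝ) := by positivity
  rw [div_le_iff₀ hf] at h1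
  linarith

lemma self_pow_le_exp_mul_fact (n : ℕ) :
    (n : ℝ) ^ n ≤ Real.exp 1 ^ n * (n.factorial : ℝ) := by
  have h := pow_le_fact_mul_exp (x := (n : ℝ)) (Nat.cast_nonneg n) n
  have : Real.exp (n : ℝ) = Real.exp 1 ^ n := by
    rw [← Real.exp_nat_mul]; norm_num
  rw [this] at h
  linarith

lemma poly_le_exp (C₁ β xh : ℝ) (hC₁ : 0 < C₁) (hβ : 0 < β) (hxh : 0 ≤ xh) (j : ℕ) :
    (C₁ * (j : ℝ) + xh) ^ (2 * j) ≤
      ((C₁ + 8 / β) * (j : ℝ)) ^ (2 * j) * Real.exp (β * xh / 4) := by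
  rcases Nat.eq_zero_or_pos j with hj | hj
  · subst hj
    simp [Real.one_le_exp (by positivity : (0:ℝ) ≤ β * xh / 4)]
  · have hj0 : (0:ℝ) < (j : ℝ) := by exact_mod_cast hj
    set t : ℝ := β * xh / (8 * j) with ht
    have ht0 : 0 ≤ t := by positivity
    have hte : t ≤ Real.exp t := by have := Real.add_one_le_exp t; linarith
    have h1e : (1:ℝ) ≤ Real.exp t := Real.one_le_exp ht0
    have hxt : xh = (8 * (j:ℝ) / β) * t := by
      rw [ht]; field_simp
    have hbase : C₁ * (j:ℝ) + xh ≤ (C₁ + 8 / β) * (j:ℝ) * Real.exp t := by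
      rw [hxt]
      have h8 : (0:ℝ) < 8 * (j:ℝ) / β := by positivity
      have h2 : (8 * (j:ℝ) / β) * t ≤ (8 * (j:ℝ) / β) * Real.exp t :=
        mul_le_mul_of_nonneg_left hte (le_of_lt h8)
      have hC : C₁ * (j:ℝ) ≤ C₁ * (j:ℝ) * Real.exp t := by
        nlinarith [mul_pos hC₁ hj0]
      calc C₁ * (j:ℝ) + 8 * (j:ℝ) / β * t
          ≤ C₁ * (j:ℝ) * Real.exp t + 8 * (j:ℝ) / β * Real.exp t := add_le_add hC h2
        _ = (C₁ + 8 / β) * (j:ℝ) * Real.exp t := by ring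
    have hpow := pow_le_pow_left₀ (by positivity : (0:ℝ) ≤ C₁ * (j:ℝ) + xh) hbase (2 * j)
    refine hpow.trans_eq ?_
    rw [mul_pow, ← Real.exp_nat_mul]
    congr 1
    rw [ht]
    push_cast
    field_simp
    ring

lemma key_ineq (γA X C₁ β ε μ xh γ₀ : ℝ)
    (hγA : 0 < γA) (hX0 : 0 ≤ X) (hC₁ : 0 < C₁) (hβ : 0 < β)
    (hε : 0 < ε) (hεμ : ε ≤ μ) (hμ1 : μ ≤ 1) (hxh : 0 ≤ xh) (hxX : xh * ε * γA ≤ X)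
    (hγ₀e : Real.exp 1 * (C₁ + 8 / β) ^ 2 ≤ γ₀) (hγ₀q : 4 * γA / β ≤ γ₀) (hγ₀1 : 1 ≤ γ₀)
    (j m n : ℕ) :
    (ε / μ) ^ (j + (m + 1 + n)) *
      (μ ^ (m + 1 + n) * xh ^ (m + 1 + n) * γA ^ (m + 1 + n) *
        (μ + 1 / ((j : ℝ) + 1)) ^ j * (1 / (j.factorial : ℝ)) *
        (C₁ * (j : ℝ) + xh) ^ (2 * j) * Real.exp (-β * xh)) ≤
      μ * (4 * γA / β) * X ^ n *
        (2 * (γ₀ * ε * ((j : ℝ) + (m : ℝ) + 1 + 1 / μ))) ^ (j + m + 1) *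
        Real.exp (-β * xh / 2) := by
  have hμ0 : 0 < μ := lt_of_lt_of_le hε hεμ
  have hμ' : μ ≠ 0 := ne_of_gt hμ0
  have hfj : (j.factorial : ℝ) ≠ 0 := by positivity
  have hγ₀0 : (0:ℝ) < γ₀ := lt_of_lt_of_le one_pos hγ₀1
  have hj0 : (0:ℝ) ≤ (j:ℝ) := Nat.cast_nonneg j
  have hm0 : (0:ℝ) ≤ (m:ℝ) := Nat.cast_nonneg m
  have hinvμ : (1:ℝ) ≤ 1 / μ := by
    rw [le_div_iff₀ hμ0, one_mul]; exact hμ1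
  obtain ⟨s, hsdef⟩ : ∃ x : ℝ, x = (j : ℝ) + (m : ℝ) + 1 + 1 / μ := ⟨_, rfl⟩
  obtain ⟨w, hwdef⟩ : ∃ x : ℝ, x = (j : ℝ) + (m : ℝ) + 1 := ⟨_, rfl⟩
  rw [← hsdef]
  have hw0 : (0:ℝ) < w := by rw [hwdef]; positivity
  have hs0 : (0:ℝ) < s := by rw [hsdef]; positivity
  have hsw : s = w + 1 / μ := by rw [hsdef, hwdef]
  have hs_card : w ≤ s := by rw [hsw]; linarith
  have hs_jinv : (j:ℝ) + 1 / μ ≤ s := by rw [hsdef]; linarith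
  have hs_inv : 1 / μ ≤ s := by rw [hsdef]; linarith
  set D : ℝ := C₁ + 8 / β with hDdef
  have hD0 : 0 < D := by rw [hDdef]; positivity
  set E4 : ℝ := Real.exp (β * xh / 4) with hE4
  have hE40 : 0 < E4 := Real.exp_pos _
  have hεs : (0:ℝ) ≤ ε * s := by positivity
  have hges : (0:ℝ) ≤ γ₀ * ε * s := by positivity
  have hgesp : ∀ p : ℕ, (0:ℝ) ≤ (γ₀ * ε * s) ^ p := fun p => pow_nonneg hges p
  -- exact algebraic regrouping
  have hEq : (ε / μ) ^ (j + (m + 1 + n)) *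
      (μ ^ (m + 1 + n) * xh ^ (m + 1 + n) * γA ^ (m + 1 + n) *
        (μ + 1 / ((j : ℝ) + 1)) ^ j * (1 / (j.factorial : ℝ)) *
        (C₁ * (j : ℝ) + xh) ^ (2 * j) * Real.exp (-β * xh)) =
      (ε * xh * γA) ^ n *
        ((ε / μ) ^ j * (μ + 1 / ((j : ℝ) + 1)) ^ j *
          ((C₁ * (j : ℝ) + xh) ^ (2 * j) * (1 / (j.factorial : ℝ)))) *
        (ε ^ m * γA ^ (m + 1) * xh ^ (m + 1) * (ε / μ) * μ) *
        Real.exp (-β * xh) := by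
    simp only [div_pow]
    field_simp
    ring
  -- group 1
  have hG1 : (ε * xh * γA) ^ n ≤ X ^ n := by
    refine pow_le_pow_left₀ (by positivity) ?_ n
    calc ε * xh * γA = xh * ε * γA := by ring
      _ ≤ X := hxX
  -- group 2
  have h3 : (ε / μ) * (μ + 1 / ((j:ℝ) + 1)) * (Real.exp 1 * D ^ 2 * (j:ℝ)) ≤ γ₀ * ε * s := by
    have hA : (μ + 1 / ((j:ℝ) + 1)) * (j:ℝ) ≤ μ * (j:ℝ) + 1 := by
      have hd : (j:ℝ) / ((j:ℝ) + 1) ≤ 1 := by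
        rw [div_le_one (by positivity)]; linarith
      have he : 1 / ((j:ℝ) + 1) * (j:ℝ) = (j:ℝ) / ((j:ℝ) + 1) := by ring
      nlinarith
    have hB : (ε / μ) * ((μ + 1 / ((j:ℝ) + 1)) * (j:ℝ)) ≤ ε * ((j:ℝ) + 1 / μ) := by
      have h1 : (ε / μ) * ((μ + 1 / ((j:ℝ) + 1)) * (j:ℝ)) ≤ (ε / μ) * (μ * (j:ℝ) + 1) :=
        mul_le_mul_of_nonneg_left hA (by positivity)
      have h2 : (ε / μ) * (μ * (j:ℝ) + 1) = ε * ((j:ℝ) + 1 / μ) := by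
        have hmm : μ * (j:ℝ) + 1 = μ * ((j:ℝ) + 1 / μ) := by
          rw [mul_add, mul_one_div, div_self hμ']
        rw [hmm, ← mul_assoc, div_mul_cancel₀ ε hμ']
      linarith
    have hC : ε * ((j:ℝ) + 1 / μ) ≤ ε * s := mul_le_mul_of_nonneg_left hs_jinv (le_of_lt hε)
    calc (ε / μ) * (μ + 1 / ((j:ℝ) + 1)) * (Real.exp 1 * D ^ 2 * (j:ℝ))
        = (Real.exp 1 * D ^ 2) * ((ε / μ) * ((μ + 1 / ((j:ℝ) + 1)) * (j:ℝ))) := by ring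
      _ ≤ γ₀ * (ε * s) := mul_le_mul hγ₀e (hB.trans hC) (by positivity) (le_of_lt hγ₀0)
      _ = γ₀ * ε * s := by ring
  have hG2 : (ε / μ) ^ j * (μ + 1 / ((j : ℝ) + 1)) ^ j *
      ((C₁ * (j : ℝ) + xh) ^ (2 * j) * (1 / (j.factorial : ℝ))) ≤
      (γ₀ * ε * s) ^ j * E4 := by
    have h1 : (C₁ * (j:ℝ) + xh) ^ (2 * j) ≤ (D * (j:ℝ)) ^ (2 * j) * E4 := by
      rw [hDdef, hE4]; exact poly_le_exp C₁ β xh hC₁ hβ hxh j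
    have h2 : (D * (j:ℝ)) ^ (2 * j) * (1 / (j.factorial : ℝ)) ≤
        (Real.exp 1 * D ^ 2 * (j:ℝ)) ^ j := by
      have hj1 : (j:ℝ) ^ j ≤ Real.exp 1 ^ j * (j.factorial : ℝ) := self_pow_le_exp_mul_fact j
      have e1 : (D * (j:ℝ)) ^ (2 * j) = (D ^ 2) ^ j * ((j:ℝ) ^ j * (j:ℝ) ^ j) := by
        rw [mul_pow, pow_mul, pow_mul, sq (j:ℝ), mul_pow]
      calc (D * (j:ℝ)) ^ (2 * j) * (1 / (j.factorial : ℝ))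
          = (D ^ 2) ^ j * ((j:ℝ) ^ j * (j:ℝ) ^ j) * (1 / (j.factorial : ℝ)) := by rw [e1]
        _ ≤ (D ^ 2) ^ j * ((j:ℝ) ^ j * (Real.exp 1 ^ j * (j.factorial : ℝ))) *
            (1 / (j.factorial : ℝ)) := by
            refine mul_le_mul_of_nonneg_right (mul_le_mul_of_nonneg_left
              (mul_le_mul_of_nonneg_left hj1 (by positivity)) (by positivity)) (by positivity)
        _ = (Real.exp 1 * D ^ 2 * (j:ℝ)) ^ j * ((j.factorial : ℝ) * (1 / (j.factorial : ℝ))) := by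
            simp only [mul_pow]
            ring
        _ = (Real.exp 1 * D ^ 2 * (j:ℝ)) ^ j := by
            rw [mul_one_div_cancel hfj, mul_one]
    calc (ε / μ) ^ j * (μ + 1 / ((j : ℝ) + 1)) ^ j *
        ((C₁ * (j : ℝ) + xh) ^ (2 * j) * (1 / (j.factorial : ℝ)))
        ≤ (ε / μ) ^ j * (μ + 1 / ((j : ℝ) + 1)) ^ j *
          ((D * (j:ℝ)) ^ (2 * j) * E4 * (1 / (j.factorial : ℝ))) := by
          refine mul_le_mul_of_nonneg_left ?_ (by positivity)
          exact mul_le_mul_of_nonneg_right h1 (by positivity)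
      _ = (ε / μ) ^ j * (μ + 1 / ((j : ℝ) + 1)) ^ j *
          ((D * (j:ℝ)) ^ (2 * j) * (1 / (j.factorial : ℝ))) * E4 := by ring
      _ ≤ (ε / μ) ^ j * (μ + 1 / ((j : ℝ) + 1)) ^ j *
          (Real.exp 1 * D ^ 2 * (j:ℝ)) ^ j * E4 := by
          exact mul_le_mul_of_nonneg_right (mul_le_mul_of_nonneg_left h2 (by positivity))
            (le_of_lt hE40)
      _ = ((ε / μ) * (μ + 1 / ((j : ℝ) + 1)) * (Real.exp 1 * D ^ 2 * (j:ℝ))) ^ j * E4 := by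
          simp only [mul_pow]
      _ ≤ (γ₀ * ε * s) ^ j * E4 :=
          mul_le_mul_of_nonneg_right (pow_le_pow_left₀ (by positivity) h3 j) (le_of_lt hE40)
  -- group 3
  have hp2 : w ≤ (2:ℝ) ^ (j + m + 1) := by
    have h := Nat.lt_two_pow_self (n := j + m + 1)
    have h' : ((j + m + 1 : ℕ) : ℝ) ≤ ((2 ^ (j + m + 1) : ℕ) : ℝ) := by exact_mod_cast le_of_lt h
    push_cast at h'
    rw [hwdef]
    linarith
  have hG3 : ε ^ m * γA ^ (m + 1) * xh ^ (m + 1) * (ε / μ) * μ ≤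
      μ * (4 * γA / β) * (2:ℝ) ^ (j + m + 1) * (γ₀ * ε * s) ^ (m + 1) * E4 := by
    have hx1 : xh ^ (m + 1) ≤ ((4 / β) * w) ^ (m + 1) * E4 := by
      have h := pow_le_fact_mul_exp (x := β * xh / 4) (by positivity) (m + 1)
      have hfact : (((m + 1).factorial : ℕ) : ℝ) ≤ w ^ (m + 1) := by
        calc (((m + 1).factorial : ℕ) : ℝ) ≤ (((m + 1) ^ (m + 1) : ℕ) : ℝ) := by
              exact_mod_cast Nat.factorial_le_pow (m + 1)
          _ = ((m:ℝ) + 1) ^ (m + 1) := by push_cast; ring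
          _ ≤ w ^ (m + 1) := by
              refine pow_le_pow_left₀ (by positivity) ?_ _
              rw [hwdef]; linarith
      have hxe : xh ^ (m + 1) = (4 / β) ^ (m + 1) * (β * xh / 4) ^ (m + 1) := by
        rw [← mul_pow]; congr 1; field_simp
      calc xh ^ (m + 1) = (4 / β) ^ (m + 1) * (β * xh / 4) ^ (m + 1) := hxe
        _ ≤ (4 / β) ^ (m + 1) * (((m + 1).factorial : ℝ) * E4) := by
            refine mul_le_mul_of_nonneg_left ?_ (by positivity)
            rw [hE4]; exact h
        _ ≤ (4 / β) ^ (m + 1) * (w ^ (m + 1) * E4) := by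
            refine mul_le_mul_of_nonneg_left
              (mul_le_mul_of_nonneg_right hfact (le_of_lt hE40)) (by positivity)
        _ = ((4 / β) * w) ^ (m + 1) * E4 := by
            rw [mul_pow]; ring
    have b1 : γA * (4 / β) * w * ε ≤ γ₀ * ε * s := by
      have h1 : γA * (4 / β) ≤ γ₀ := by
        calc γA * (4 / β) = 4 * γA / β := by ring
          _ ≤ γ₀ := hγ₀q
      have h2 : γA * (4 / β) * w ≤ γ₀ * s :=
        mul_le_mul h1 hs_card (le_of_lt hw0) (le_of_lt hγ₀0)
      calc γA * (4 / β) * w * ε ≤ γ₀ * s * ε :=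
            mul_le_mul_of_nonneg_right h2 (le_of_lt hε)
        _ = γ₀ * ε * s := by ring
    have b2 : (ε / μ) * (γA * (4 / β) * w) ≤
        (4 * γA / β) * ((2:ℝ) ^ (j + m + 1) * (γ₀ * ε * s)) := by
      have h1 : (ε / μ) * w ≤ (2:ℝ) ^ (j + m + 1) * (γ₀ * ε * s) := by
        have ha : (ε / μ) * w ≤ (ε * s) * w := by
          refine mul_le_mul_of_nonneg_right ?_ (le_of_lt hw0)
          calc ε / μ = ε * (1 / μ) := by ring
            _ ≤ ε * s := mul_le_mul_of_nonneg_left hs_inv (le_of_lt hε)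
        have hb : (ε * s) * w ≤ (ε * s) * (2:ℝ) ^ (j + m + 1) :=
          mul_le_mul_of_nonneg_left hp2 hεs
        have hc : (ε * s) * (2:ℝ) ^ (j + m + 1) ≤ (γ₀ * ε * s) * (2:ℝ) ^ (j + m + 1) := by
          refine mul_le_mul_of_nonneg_right ?_ (by positivity)
          nlinarith [mul_pos hε hs0]
        calc (ε / μ) * w ≤ (ε * s) * w := ha
          _ ≤ (ε * s) * (2:ℝ) ^ (j + m + 1) := hb
          _ ≤ (γ₀ * ε * s) * (2:ℝ) ^ (j + m + 1) := hc
          _ = (2:ℝ) ^ (j + m + 1) * (γ₀ * ε * s) := by ring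
      calc (ε / μ) * (γA * (4 / β) * w)
          = (γA * (4 / β)) * ((ε / μ) * w) := by ring
        _ ≤ (γA * (4 / β)) * ((2:ℝ) ^ (j + m + 1) * (γ₀ * ε * s)) :=
            mul_le_mul_of_nonneg_left h1 (by positivity)
        _ = (4 * γA / β) * ((2:ℝ) ^ (j + m + 1) * (γ₀ * ε * s)) := by ring
    calc ε ^ m * γA ^ (m + 1) * xh ^ (m + 1) * (ε / μ) * μ
        ≤ ε ^ m * γA ^ (m + 1) * (((4 / β) * w) ^ (m + 1) * E4) * (ε / μ) * μ := by
          refine mul_le_mul_of_nonneg_right (mul_le_mul_of_nonneg_right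
            (mul_le_mul_of_nonneg_left hx1 (by positivity)) (by positivity))
            (le_of_lt hμ0)
      _ = μ * E4 * (γA * (4 / β) * w * ε) ^ m *
          ((ε / μ) * (γA * (4 / β) * w)) := by
          simp only [mul_pow, pow_succ]
          ring
      _ ≤ μ * E4 * (γ₀ * ε * s) ^ m *
          ((4 * γA / β) * ((2:ℝ) ^ (j + m + 1) * (γ₀ * ε * s))) := by
          refine mul_le_mul (mul_le_mul_of_nonneg_left
            (pow_le_pow_left₀ (by positivity) b1 m) (by positivity)) b2 (by positivity) ?_
          have hh : (0:ℝ) ≤ μ * E4 * (γ₀ * ε * s) ^ m :=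
            mul_nonneg (by positivity) (hgesp m)
          exact hh
      _ = μ * (4 * γA / β) * (2:ℝ) ^ (j + m + 1) * (γ₀ * ε * s) ^ (m + 1) * E4 := by
          rw [pow_succ]; ring
  -- combine
  rw [hEq]
  have hXE : (0:ℝ) ≤ X ^ n * ((γ₀ * ε * s) ^ j * E4) :=
    mul_nonneg (pow_nonneg hX0 n) (mul_nonneg (hgesp j) (le_of_lt hE40))
  calc (ε * xh * γA) ^ n *
        ((ε / μ) ^ j * (μ + 1 / ((j : ℝ) + 1)) ^ j *
          ((C₁ * (j : ℝ) + xh) ^ (2 * j) * (1 / (j.factorial : ℝ)))) *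
        (ε ^ m * γA ^ (m + 1) * xh ^ (m + 1) * (ε / μ) * μ) *
        Real.exp (-β * xh)
      ≤ X ^ n * ((γ₀ * ε * s) ^ j * E4) *
        (μ * (4 * γA / β) * (2:ℝ) ^ (j + m + 1) * (γ₀ * ε * s) ^ (m + 1) * E4) *
        Real.exp (-β * xh) := by
        refine mul_le_mul_of_nonneg_right ?_ (Real.exp_pos _).le
        exact mul_le_mul (mul_le_mul hG1 hG2 (by positivity) (by positivity)) hG3
          (by positivity) hXE
    _ = μ * (4 * γA / β) * X ^ n *
        ((γ₀ * ε * s) ^ j * (γ₀ * ε * s) ^ (m + 1) * (2:ℝ) ^ (j + m + 1)) *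
        (E4 * E4 * Real.exp (-β * xh)) := by ring
    _ = μ * (4 * γA / β) * X ^ n * (2 * (γ₀ * ε * s)) ^ (j + m + 1) *
        Real.exp (-β * xh / 2) := by
        have hpow : (γ₀ * ε * s) ^ j * (γ₀ * ε * s) ^ (m + 1) * (2:ℝ) ^ (j + m + 1) =
            (2 * (γ₀ * ε * s)) ^ (j + m + 1) := by
          rw [← pow_add, mul_pow]
          ring
        have hexp : E4 * E4 * Real.exp (-β * xh) = Real.exp (-β * xh / 2) := by
          rw [hE4, ← Real.exp_add, ← Real.exp_add]
          ring_nf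
        rw [hpow, hexp]

open Finset

/-- The `i`-th term of the residual sum of the truncated boundary-layer
expansion:
`(ε/μ)^i · Σ_{k=i-M}^{i} μ^k x̂^k γ_A^k (μ + 1/(i-k+1))^{i-k} (1/(i-k)!)
  (C₁(i-k)+x̂)^{2(i-k)} e^{-βx̂}`. -/
noncomputable def term18 (γA C₁ β ε μ xh : ℝ) (M i : ℕ) : ℝ :=
  (ε / μ) ^ i *
    ∑ k ∈ Finset.Icc (i - M) i,
      μ ^ k * xh ^ k * γA ^ k * (μ + 1 / (((i - k : ℕ) : ℝ) + 1)) ^ (i - k) *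
        (1 / ((i - k).factorial : ℝ)) * (C₁ * ((i - k : ℕ) : ℝ) + xh) ^ (2 * (i - k)) *
        Real.exp (-β * xh)

/-- Summation estimate for the residual of the truncated boundary-layer
expansion: for `0 ≤ x̂εγ_A ≤ X < 1` the double sum over `i ≥ M+1` and
`i-M ≤ k ≤ i` is bounded by `(Cμ/(1-X))(γε(M+1+1/μ))^{M+1}e^{-βx̂/2}`. -/
theorem stmt_18 (γA X C₁ β : ℝ) (hγA : 0 < γA) (hX0 : 0 < X) (hX1 : X < 1)
    (hC₁ : 0 < C₁) (hβ : 0 < β) :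
    ∃ C γ : ℝ, 0 < C ∧ 0 < γ ∧
      ∀ ε μ : ℝ, 0 < ε → ε ≤ μ → μ ≤ 1 →
      ∀ M : ℕ, ∀ xh : ℝ, 0 ≤ xh → xh * ε * γA ≤ X →
        (∑' n : ℕ, term18 γA C₁ β ε μ xh M (M + 1 + n)) ≤
          (C * μ / (1 - X)) * (γ * ε * ((M : ℝ) + 1 + 1 / μ)) ^ (M + 1) *
            Real.exp (-β * xh / 2) := by
  refine ⟨4 * γA / β, 4 * (max (max (Real.exp 1 * (C₁ + 8 / β) ^ 2) (4 * γA / β)) 1),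
    by positivity, ?_, ?_⟩
  · have h1 : (1:ℝ) ≤ max (max (Real.exp 1 * (C₁ + 8 / β) ^ 2) (4 * γA / β)) 1 :=
      le_max_right _ _
    linarith
  intro ε μ hε hεμ hμ1 M xh hxh hxX
  set γ₀ : ℝ := max (max (Real.exp 1 * (C₁ + 8 / β) ^ 2) (4 * γA / β)) 1 with hγ₀def
  have hγ₀e : Real.exp 1 * (C₁ + 8 / β) ^ 2 ≤ γ₀ := le_trans (le_max_left _ _) (le_max_left _ _)
  have hγ₀q : 4 * γA / β ≤ γ₀ := le_trans (le_max_right _ _) (le_max_left _ _)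
  have hγ₀1 : (1:ℝ) ≤ γ₀ := le_max_right _ _
  have hγ₀0 : (0:ℝ) < γ₀ := lt_of_lt_of_le one_pos hγ₀1
  have hμ0 : 0 < μ := lt_of_lt_of_le hε hεμ
  have hQ0 : (0:ℝ) < 4 * γA / β := by positivity
  have hs0 : (0:ℝ) < (M : ℝ) + 1 + 1 / μ := by positivity
  -- the geometric-series coefficient
  set c : ℝ := μ * (4 * γA / β) * (4 * γ₀ * ε * ((M : ℝ) + 1 + 1 / μ)) ^ (M + 1) *
    Real.exp (-β * xh / 2) with hcdef
  have hc0 : 0 ≤ c := by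
    refine mul_nonneg (mul_nonneg (mul_nonneg hμ0.le hQ0.le) (pow_nonneg ?_ _))
      (Real.exp_pos _).le
    positivity
  -- per-index bound
  have key : ∀ n : ℕ, term18 γA C₁ β ε μ xh M (M + 1 + n) ≤ c * X ^ n := by
    intro n
    have hcard : (Finset.Icc (M + 1 + n - M) (M + 1 + n)).card = M + 1 := by
      rw [Nat.card_Icc]; omega
    have hterm : ∀ k ∈ Finset.Icc (M + 1 + n - M) (M + 1 + n),
        (ε / μ) ^ (M + 1 + n) *
          (μ ^ k * xh ^ k * γA ^ k *
            (μ + 1 / (((M + 1 + n - k : ℕ) : ℝ) + 1)) ^ (M + 1 + n - k) *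
            (1 / ((M + 1 + n - k).factorial : ℝ)) *
            (C₁ * ((M + 1 + n - k : ℕ) : ℝ) + xh) ^ (2 * (M + 1 + n - k)) *
            Real.exp (-β * xh)) ≤
        μ * (4 * γA / β) * X ^ n *
          (2 * (γ₀ * ε * ((M : ℝ) + 1 + 1 / μ))) ^ (M + 1) * Real.exp (-β * xh / 2) := by
      intro k hk
      rw [Finset.mem_Icc] at hk
      obtain ⟨j, m, hj1, hj2, hj3, hj4⟩ :
          ∃ j m : ℕ, M + 1 + n - k = j ∧ M = j + m ∧ k = m + 1 + n ∧
            M + 1 + n = j + (m + 1 + n) :=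
        ⟨M + 1 + n - k, M - (M + 1 + n - k), rfl, by omega, by omega, by omega⟩
      have hMc : (M : ℝ) + 1 + 1 / μ = (j : ℝ) + (m : ℝ) + 1 + 1 / μ := by
        rw [hj2]; push_cast; ring
      have hMe : M + 1 = j + m + 1 := by omega
      rw [hj1, hj3, hj4, hMc, hMe]
      exact key_ineq γA X C₁ β ε μ xh γ₀ hγA hX0.le hC₁ hβ hε hεμ hμ1 hxh hxX
        hγ₀e hγ₀q hγ₀1 j m n
    calc term18 γA C₁ β ε μ xh M (M + 1 + n)
        = ∑ k ∈ Finset.Icc (M + 1 + n - M) (M + 1 + n),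
            (ε / μ) ^ (M + 1 + n) *
            (μ ^ k * xh ^ k * γA ^ k *
              (μ + 1 / (((M + 1 + n - k : ℕ) : ℝ) + 1)) ^ (M + 1 + n - k) *
              (1 / ((M + 1 + n - k).factorial : ℝ)) *
              (C₁ * ((M + 1 + n - k : ℕ) : ℝ) + xh) ^ (2 * (M + 1 + n - k)) *
              Real.exp (-β * xh)) := by
          rw [term18, Finset.mul_sum]
      _ ≤ ∑ _k ∈ Finset.Icc (M + 1 + n - M) (M + 1 + n),
            (μ * (4 * γA / β) * X ^ n *
              (2 * (γ₀ * ε * ((M : ℝ) + 1 + 1 / μ))) ^ (M + 1) *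
              Real.exp (-β * xh / 2)) :=
          Finset.sum_le_sum hterm
      _ = ((M : ℝ) + 1) * (μ * (4 * γA / β) * X ^ n *
            (2 * (γ₀ * ε * ((M : ℝ) + 1 + 1 / μ))) ^ (M + 1) *
            Real.exp (-β * xh / 2)) := by
          rw [Finset.sum_const, hcard, nsmul_eq_mul]
          push_cast
          ring
      _ ≤ c * X ^ n := by
          rw [hcdef]
          have h2M : ((M : ℝ) + 1) ≤ (2:ℝ) ^ (M + 1) := by
            have h := Nat.lt_two_pow_self (n := M + 1)
            have h' : ((M + 1 : ℕ) : ℝ) ≤ ((2 ^ (M + 1) : ℕ) : ℝ) := by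
              exact_mod_cast le_of_lt h
            push_cast at h'
            linarith
          have hbase : (0:ℝ) ≤ 2 * (γ₀ * ε * ((M : ℝ) + 1 + 1 / μ)) := by positivity
          have hkey : ((M : ℝ) + 1) * (2 * (γ₀ * ε * ((M : ℝ) + 1 + 1 / μ))) ^ (M + 1) ≤
              (4 * γ₀ * ε * ((M : ℝ) + 1 + 1 / μ)) ^ (M + 1) := by
            calc ((M : ℝ) + 1) * (2 * (γ₀ * ε * ((M : ℝ) + 1 + 1 / μ))) ^ (M + 1)
                ≤ (2:ℝ) ^ (M + 1) * (2 * (γ₀ * ε * ((M : ℝ) + 1 + 1 / μ))) ^ (M + 1) :=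
                  mul_le_mul_of_nonneg_right h2M (pow_nonneg hbase _)
              _ = (4 * γ₀ * ε * ((M : ℝ) + 1 + 1 / μ)) ^ (M + 1) := by
                  rw [← mul_pow]
                  congr 1
                  ring
          calc ((M : ℝ) + 1) * (μ * (4 * γA / β) * X ^ n *
                (2 * (γ₀ * ε * ((M : ℝ) + 1 + 1 / μ))) ^ (M + 1) *
                Real.exp (-β * xh / 2))
              = (((M : ℝ) + 1) * (2 * (γ₀ * ε * ((M : ℝ) + 1 + 1 / μ))) ^ (M + 1)) *
                (μ * (4 * γA / β) * Real.exp (-β * xh / 2)) * X ^ n := by ring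
            _ ≤ ((4 * γ₀ * ε * ((M : ℝ) + 1 + 1 / μ)) ^ (M + 1)) *
                (μ * (4 * γA / β) * Real.exp (-β * xh / 2)) * X ^ n := by
                refine mul_le_mul_of_nonneg_right (mul_le_mul_of_nonneg_right hkey ?_)
                  (pow_nonneg hX0.le n)
                positivity
            _ = μ * (4 * γA / β) * (4 * γ₀ * ε * ((M : ℝ) + 1 + 1 / μ)) ^ (M + 1) *
                Real.exp (-β * xh / 2) * X ^ n := by ring
  -- nonnegativity of terms
  have hnonneg : ∀ n : ℕ, 0 ≤ term18 γA C₁ β ε μ xh M (M + 1 + n) := by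
    intro n
    rw [term18]
    refine mul_nonneg (by positivity) (Finset.sum_nonneg ?_)
    intro k _
    refine mul_nonneg (mul_nonneg (mul_nonneg (mul_nonneg (mul_nonneg (mul_nonneg
      (by positivity) (by positivity)) (by positivity)) ?_) (by positivity)) ?_)
      (Real.exp_pos _).le
    · exact pow_nonneg (add_nonneg hμ0.le (by positivity)) _
    · exact pow_nonneg (add_nonneg (by positivity) hxh) _
  -- sum up
  have hsum2 : Summable (fun n : ℕ => c * X ^ n) :=
    (summable_geometric_of_lt_one hX0.le hX1).mul_left c
  have hsum1 : Summable (fun n : ℕ => term18 γA C₁ β ε μ xh M (M + 1 + n)) :=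
    Summable.of_nonneg_of_le hnonneg key hsum2
  calc (∑' n : ℕ, term18 γA C₁ β ε μ xh M (M + 1 + n))
      ≤ ∑' n : ℕ, c * X ^ n := Summable.tsum_le_tsum key hsum1 hsum2
    _ = c * (1 - X)⁻¹ := by
        rw [tsum_mul_left, tsum_geometric_of_lt_one hX0.le hX1]
    _ = (4 * γA / β * μ / (1 - X)) *
        (4 * γ₀ * ε * ((M : ℝ) + 1 + 1 / μ)) ^ (M + 1) * Real.exp (-β * xh / 2) := by
        rw [hcdef, div_eq_mul_inv]
        ring
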